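/- In IBV, the following forms of monotonicity are equivalent for fixed formulas A and B: (1) A⊸B is provable; (2) P[A]⊸P[B] is provable for every positive context P; (3) N[B]⊸N[A] is provable for every negative context N. -/

import Mathlib

/-- IBV formulas: A ::= a | 1 | A⊗A | A⊸A | A◁A. -/
inductive IBVF : Type
  | atom : ℕ → IBVF
  | one : IBVF
  | tens : IBVF → IBVF → IBVF
  | limp : IBVF → IBVF → IBVF
  | seq : IBVF → IBVF → IBVF

open IBVF

/-- The inference rules of the deep inference system IBV, rewriting the premise
    to the conclusion.  The Boolean index is the polarity of the context where
    the rule may be applied: `true` = positive (∘-rules), `false` = negative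
    (•-rules); rules with a universally quantified polarity apply in both. -/
inductive IBVRule : Bool → IBVF → IBVF → Prop
  | ai_down (a : ℕ) : IBVRule true one (limp (atom a) (atom a))
  | u_down_seqL (A : IBVF) : IBVRule true A (seq one A)
  | u_down_seqR (A : IBVF) : IBVRule true A (seq A one)
  | ref_pos (A B : IBVF) : IBVRule true (tens A B) (seq A B)
  | ref_neg (A B : IBVF) : IBVRule false (seq A B) (tens A B)
  | sL_pos (A B C : IBVF) : IBVRule true (tens A (limp B C)) (limp (limp A B) C)
  | sR_pos (A B C : IBVF) : IBVRule true (tens (limp A B) C) (limp A (tens B C))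
  | sL_neg (A B C : IBVF) : IBVRule false (limp (limp A B) C) (tens A (limp B C))
  | sR_neg (A B C : IBVF) : IBVRule false (limp A (tens B C)) (tens (limp A B) C)
  | sqL_pos (A B C : IBVF) : IBVRule true (seq (limp A B) C) (limp A (seq B C))
  | sqR_pos (A B C : IBVF) : IBVRule true (seq B (limp A C)) (limp A (seq B C))
  | sqL_neg (A B C : IBVF) : IBVRule false (seq (tens A B) C) (tens A (seq B C))
  | sqR_neg (A B C : IBVF) : IBVRule false (seq B (tens A C)) (tens A (seq B C))
  | q_down_pos (A B C D : IBVF) :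
      IBVRule true (seq (limp A B) (limp C D)) (limp (seq A C) (seq B D))
  | q_down_neg (A B C D : IBVF) :
      IBVRule false (seq (tens A B) (tens C D)) (tens (seq A C) (seq B D))
  | com_tens (p : Bool) (A B : IBVF) : IBVRule p (tens A B) (tens B A)
  | asso_tens (p : Bool) (A B C : IBVF) :
      IBVRule p (tens (tens A B) C) (tens A (tens B C))
  | assoL_seq (p : Bool) (A B C : IBVF) :
      IBVRule p (seq (seq A B) C) (seq A (seq B C))
  | assoR_seq (p : Bool) (A B C : IBVF) :
      IBVRule p (seq A (seq B C)) (seq (seq A B) C)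
  | u_down_tens (p : Bool) (A : IBVF) : IBVRule p A (tens one A)
  | u_down_limp (p : Bool) (A : IBVF) : IBVRule p A (limp one A)
  | cur (p : Bool) (A B C : IBVF) :
      IBVRule p (limp (tens A B) C) (limp A (limp B C))
  | ruc (p : Bool) (A B C : IBVF) :
      IBVRule p (limp A (limp B C)) (limp (tens A B) C)

/-- The up-rules added to IBV to form the symmetric system SIBV. -/
inductive UpRule : Bool → IBVF → IBVF → Prop
  | ai_up (a : ℕ) : UpRule false (limp (atom a) (atom a)) one
  | u_up_seqL (A : IBVF) : UpRule false (seq one A) A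
  | u_up_seqR (A : IBVF) : UpRule false (seq A one) A
  | u_up_tens (p : Bool) (A : IBVF) : UpRule p (tens one A) A
  | u_up_limp (p : Bool) (A : IBVF) : UpRule p (limp one A) A
  | q_up_pos (A B C D : IBVF) :
      UpRule true (tens (seq A C) (seq B D)) (seq (tens A B) (tens C D))
  | q_up_neg (A B C D : IBVF) :
      UpRule false (limp (seq A C) (seq B D)) (seq (limp A B) (limp C D))

/-- The rules of the symmetric system SIBV: the IBV rules plus the up-rules. -/
def SIBVRule (p : Bool) (A B : IBVF) : Prop := IBVRule p A B ∨ UpRule p A B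

/-- One deep rewrite step, for a given rule system `R`.  `Step R p X Y` means
    that `X` rewrites to `Y` by applying a rule of `R` at some position whose
    polarity (relative to the ambient polarity `p`) matches the rule's polarity
    annotation; polarity flips when descending into the left of a ⊸. -/
inductive Step (R : Bool → IBVF → IBVF → Prop) : Bool → IBVF → IBVF → Prop
  | rule {p : Bool} {A B : IBVF} : R p A B → Step R p A B
  | tensL {p : Bool} {A A' B : IBVF} :
      Step R p A A' → Step R p (tens A B) (tens A' B)
  | tensR {p : Bool} {A B B' : IBVF} :
      Step R p B B' → Step R p (tens A B) (tens A B')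
  | seqL {p : Bool} {A A' B : IBVF} :
      Step R p A A' → Step R p (seq A B) (seq A' B)
  | seqR {p : Bool} {A B B' : IBVF} :
      Step R p B B' → Step R p (seq A B) (seq A B')
  | limpL {p : Bool} {A A' B : IBVF} :
      Step R (!p) A A' → Step R p (limp A B) (limp A' B)
  | limpR {p : Bool} {A B B' : IBVF} :
      Step R p B B' → Step R p (limp A B) (limp A B')

/-- A derivation of polarity `p` (`true` = positive, `false` = negative) in the
    system `R` from premise `X` to conclusion `Y`: a finite sequence of deep
    rewrite steps. -/
def Deriv (R : Bool → IBVF → IBVF → Prop) (p : Bool) : IBVF → IBVF → Prop :=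
  Relation.ReflTransGen (Step R p)

/-- A formula is provable in IBV if there is a positive derivation from 1. -/
def IBVProvable (A : IBVF) : Prop := Deriv IBVRule true one A

/-- A formula is provable in SIBV if there is a positive derivation from 1. -/
def SIBVProvable (A : IBVF) : Prop := Deriv SIBVRule true one A

/-- Contexts over IBV formulas: a formula with a single hole. -/
inductive Ctx : Type
  | hole : Ctx
  | tensL : Ctx → IBVF → Ctx
  | tensR : IBVF → Ctx → Ctx
  | limpL : Ctx → IBVF → Ctx
  | limpR : IBVF → Ctx → Ctx
  | seqL : Ctx → IBVF → Ctx
  | seqR : IBVF → Ctx → Ctx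

/-- Polarity of the hole of a context: `true` = positive, `false` = negative.
    Polarity flips on the left of ⊸. -/
def Ctx.pol : Ctx → Bool
  | .hole => true
  | .tensL C _ => C.pol
  | .tensR _ C => C.pol
  | .limpL C _ => !C.pol
  | .limpR _ C => C.pol
  | .seqL C _ => C.pol
  | .seqR _ C => C.pol

/-- Plugging a formula into the hole of a context. -/
def Ctx.fill : Ctx → IBVF → IBVF
  | .hole, X => X
  | .tensL C B, X => tens (C.fill X) B
  | .tensR A C, X => tens A (C.fill X)
  | .limpL C B, X => limp (C.fill X) B
  | .limpR A C, X => limp A (C.fill X)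
  | .seqL C B, X => seq (C.fill X) B
  | .seqR A C, X => seq A (C.fill X)


namespace IBVAux

open IBVF Relation

abbrev Pos : IBVF → IBVF → Prop := Deriv IBVRule true
abbrev Neg : IBVF → IBVF → Prop := Deriv IBVRule false

/-! ### Basic derivation lemmas -/

lemma dref {p : Bool} {X : IBVF} : Deriv IBVRule p X X := ReflTransGen.refl

lemma dtrans {p : Bool} {X Y Z : IBVF} (h1 : Deriv IBVRule p X Y)
    (h2 : Deriv IBVRule p Y Z) : Deriv IBVRule p X Z := ReflTransGen.trans h1 h2

lemma dstep {p : Bool} {X Y : IBVF} (h : Step IBVRule p X Y) : Deriv IBVRule p X Y :=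
  ReflTransGen.single h

lemma drule {p : Bool} {X Y : IBVF} (h : IBVRule p X Y) : Deriv IBVRule p X Y :=
  ReflTransGen.single (Step.rule h)

lemma dTensL {p : Bool} {A A' B : IBVF} (h : Deriv IBVRule p A A') :
    Deriv IBVRule p (tens A B) (tens A' B) :=
  ReflTransGen.lift (fun X => tens X B) (fun _ _ hs => Step.tensL hs) _ _ h

lemma dTensR {p : Bool} {A B B' : IBVF} (h : Deriv IBVRule p B B') :
    Deriv IBVRule p (tens A B) (tens A B') :=
  ReflTransGen.lift (fun X => tens A X) (fun _ _ hs => Step.tensR hs) _ _ h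

lemma dSeqL {p : Bool} {A A' B : IBVF} (h : Deriv IBVRule p A A') :
    Deriv IBVRule p (seq A B) (seq A' B) :=
  ReflTransGen.lift (fun X => seq X B) (fun _ _ hs => Step.seqL hs) _ _ h

lemma dSeqR {p : Bool} {A B B' : IBVF} (h : Deriv IBVRule p B B') :
    Deriv IBVRule p (seq A B) (seq A B') :=
  ReflTransGen.lift (fun X => seq A X) (fun _ _ hs => Step.seqR hs) _ _ h

lemma dLimpL {p : Bool} {A A' B : IBVF} (h : Deriv IBVRule (!p) A A') :
    Deriv IBVRule p (limp A B) (limp A' B) :=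
  ReflTransGen.lift (fun X => limp X B) (fun _ _ hs => Step.limpL hs) _ _ h

lemma dLimpR {p : Bool} {A B B' : IBVF} (h : Deriv IBVRule p B B') :
    Deriv IBVRule p (limp A B) (limp A B') :=
  ReflTransGen.lift (fun X => limp A X) (fun _ _ hs => Step.limpR hs) _ _ h

/-- specialization: inside the left of a ⊸ in a positive derivation we rewrite negatively -/
lemma dLimpL' {A A' B : IBVF} (h : Neg A A') : Pos (limp A B) (limp A' B) := dLimpL h

/-- inside the left of a ⊸ in a negative derivation we rewrite positively -/
lemma dLimpL'' {A A' B : IBVF} (h : Pos A A') : Neg (limp A B) (limp A' B) := dLimpL h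

/-! ### No rule concludes `one` or an atom -/

lemma rule_ne_one {p : Bool} {X Y : IBVF} (h : IBVRule p X Y) : Y ≠ one := by
  cases h <;> simp

lemma step_ne_one {p : Bool} {X Y : IBVF} (h : Step IBVRule p X Y) : Y ≠ one := by
  cases h with
  | rule h => exact rule_ne_one h
  | _ => simp

lemma deriv_one_eq {p : Bool} {X : IBVF} (h : Deriv IBVRule p X one) : X = one := by
  induction h using ReflTransGen.head_induction_on with
  | refl => rfl
  | head hs _ ih =>
    exact absurd ih (by rintro rfl; exact step_ne_one hs rfl)

lemma deriv_ne_one {p : Bool} {X Y : IBVF} (h : Deriv IBVRule p X Y) (hx : X ≠ one) :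
    Y ≠ one := fun hy => hx (deriv_one_eq (hy ▸ h))

/-! ### Smart tensor and seq -/

noncomputable instance : DecidableEq IBVF := Classical.decEq _

noncomputable def smt (x y : IBVF) : IBVF :=
  if x = one then y else if y = one then x else tens x y

noncomputable def sms (x y : IBVF) : IBVF :=
  if x = one then y else if y = one then x else seq x y

@[simp] lemma smt_one_left (y : IBVF) : smt one y = y := by simp [smt]
@[simp] lemma smt_one_right (x : IBVF) : smt x one = x := by
  by_cases h : x = one <;> simp [smt, h]
lemma smt_ne {x y : IBVF} (hx : x ≠ one) (hy : y ≠ one) : smt x y = tens x y := by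
  simp [smt, hx, hy]
@[simp] lemma sms_one_left (y : IBVF) : sms one y = y := by simp [sms]
@[simp] lemma sms_one_right (x : IBVF) : sms x one = x := by
  by_cases h : x = one <;> simp [sms, h]
lemma sms_ne {x y : IBVF} (hx : x ≠ one) (hy : y ≠ one) : sms x y = seq x y := by
  simp [sms, hx, hy]

lemma smt_ne_one {x y : IBVF} (hx : x ≠ one) : smt x y ≠ one := by
  by_cases hy : y = one
  · subst hy; simpa using hx
  · rw [smt_ne hx hy]; simp

lemma smt_ne_one' {x y : IBVF} (hy : y ≠ one) : smt x y ≠ one := by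
  by_cases hx : x = one
  · subst hx; simpa using hy
  · rw [smt_ne hx hy]; simp

/-! ### Identity -/

lemma idd (X : IBVF) : Pos one (limp X X) := by
  induction X with
  | atom a => exact drule (IBVRule.ai_down a)
  | one => exact drule (IBVRule.u_down_limp true one)
  | tens X Y ihX ihY =>
    -- 1 ⟶ X⊸X ⟶ X⊸(1⊗X) ⟶ X⊸((Y⊸Y)⊗X) ⟶ X⊸(Y⊸(Y⊗X)) ⟶ (X⊗Y)⊸(Y⊗X) ⟶ (X⊗Y)⊸(X⊗Y)
    refine dtrans ihX ?_
    refine dtrans (dLimpR (drule (IBVRule.u_down_tens true X))) ?_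
    refine dtrans (dLimpR (dTensL ihY)) ?_
    refine dtrans (dLimpR (drule (IBVRule.sR_pos Y Y X))) ?_
    refine dtrans (drule (IBVRule.ruc true X Y (tens Y X))) ?_
    exact dLimpR (drule (IBVRule.com_tens true Y X))
  | seq X Y ihX ihY =>
    refine dtrans (drule (IBVRule.u_down_seqL one)) ?_
    refine dtrans (dSeqL ihX) ?_
    refine dtrans (dSeqR ihY) ?_
    exact drule (IBVRule.q_down_pos X X Y Y)
  | limp X Y ihX ihY =>
    -- 1 ⟶ Y⊸Y ⟶ (1⊸Y)⊸Y ⟶ ((X⊸X)⊸Y)⊸Y ⟶ (X⊗(X⊸Y))⊸Y ⟶ ((X⊸Y)⊗X)⊸Y ⟶ (X⊸Y)⊸(X⊸Y)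
    refine dtrans ihY ?_
    refine dtrans (dLimpL' (drule (IBVRule.u_down_limp false Y))) ?_
    refine dtrans (dLimpL' (dLimpL'' ihX)) ?_
    refine dtrans (dLimpL' (drule (IBVRule.sL_neg X X Y))) ?_
    refine dtrans (dLimpL' (drule (IBVRule.com_tens false X (limp X Y)))) ?_
    exact drule (IBVRule.cur true (limp X Y) X Y)

/-! ### Monotonicity wrappers -/

lemma wTensR {X Y : IBVF} (C : IBVF) (h : Pos one (limp X Y)) :
    Pos one (limp (tens X C) (tens Y C)) := by
  refine dtrans h ?_
  refine dtrans (dLimpR (drule (IBVRule.u_down_tens true Y))) ?_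
  refine dtrans (dLimpR (dTensL (idd C))) ?_
  refine dtrans (dLimpR (drule (IBVRule.sR_pos C C Y))) ?_
  refine dtrans (dLimpR (dLimpR (drule (IBVRule.com_tens true C Y)))) ?_
  exact drule (IBVRule.ruc true X C (tens Y C))

lemma wTensL {X Y : IBVF} (C : IBVF) (h : Pos one (limp X Y)) :
    Pos one (limp (tens C X) (tens C Y)) := by
  refine dtrans (wTensR C h) ?_
  refine dtrans (dLimpL' (drule (IBVRule.com_tens false X C))) ?_
  exact dLimpR (drule (IBVRule.com_tens true Y C))

lemma wSeqL {X Y : IBVF} (C : IBVF) (h : Pos one (limp X Y)) :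
    Pos one (limp (seq X C) (seq Y C)) := by
  refine dtrans h ?_
  refine dtrans (drule (IBVRule.u_down_seqR (limp X Y))) ?_
  refine dtrans (dSeqR (idd C)) ?_
  exact drule (IBVRule.q_down_pos X Y C C)

lemma wSeqR {X Y : IBVF} (C : IBVF) (h : Pos one (limp X Y)) :
    Pos one (limp (seq C X) (seq C Y)) := by
  refine dtrans h ?_
  refine dtrans (drule (IBVRule.u_down_seqL (limp X Y))) ?_
  refine dtrans (dSeqL (idd C)) ?_
  exact drule (IBVRule.q_down_pos C C X Y)

lemma wLimpR {X Y : IBVF} (C : IBVF) (h : Pos one (limp X Y)) :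
    Pos one (limp (limp C X) (limp C Y)) := by
  refine dtrans h ?_
  refine dtrans (dLimpL' (drule (IBVRule.u_down_limp false X))) ?_
  refine dtrans (dLimpL' (dLimpL'' (idd C))) ?_
  refine dtrans (dLimpL' (drule (IBVRule.sL_neg C C X))) ?_
  refine dtrans (dLimpL' (drule (IBVRule.com_tens false C (limp C X)))) ?_
  exact drule (IBVRule.cur true (limp C X) C Y)

lemma wLimpL {X Y : IBVF} (C : IBVF) (h : Pos one (limp X Y)) :
    Pos one (limp (limp Y C) (limp X C)) := by
  refine dtrans (idd C) ?_
  refine dtrans (dLimpL' (drule (IBVRule.u_down_limp false C))) ?_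
  refine dtrans (dLimpL' (dLimpL'' h)) ?_
  refine dtrans (dLimpL' (drule (IBVRule.sL_neg X Y C))) ?_
  refine dtrans (dLimpL' (drule (IBVRule.com_tens false X (limp Y C)))) ?_
  exact drule (IBVRule.cur true (limp Y C) X C)

theorem monoCtx {A B : IBVF} (h : IBVProvable (limp A B)) : ∀ P : Ctx,
    (P.pol = true → IBVProvable (limp (P.fill A) (P.fill B))) ∧
    (P.pol = false → IBVProvable (limp (P.fill B) (P.fill A))) := by
  intro P
  induction P with
  | hole =>
    constructor
    · intro _; exact h
    · intro hc; simp [Ctx.pol] at hc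
  | tensL Q C ih =>
    constructor
    · intro hp; simp [Ctx.pol] at hp
      exact wTensR C (ih.1 hp)
    · intro hp; simp [Ctx.pol] at hp
      exact wTensR C (ih.2 hp)
  | tensR C Q ih =>
    constructor
    · intro hp; simp [Ctx.pol] at hp
      exact wTensL C (ih.1 hp)
    · intro hp; simp [Ctx.pol] at hp
      exact wTensL C (ih.2 hp)
  | limpL Q C ih =>
    constructor
    · intro hp; simp [Ctx.pol] at hp
      exact wLimpL C (ih.2 hp)
    · intro hp; simp [Ctx.pol] at hp
      exact wLimpL C (ih.1 hp)
  | limpR C Q ih =>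
    constructor
    · intro hp; simp [Ctx.pol] at hp
      exact wLimpR C (ih.1 hp)
    · intro hp; simp [Ctx.pol] at hp
      exact wLimpR C (ih.2 hp)
  | seqL Q C ih =>
    constructor
    · intro hp; simp [Ctx.pol] at hp
      exact wSeqL C (ih.1 hp)
    · intro hp; simp [Ctx.pol] at hp
      exact wSeqL C (ih.2 hp)
  | seqR C Q ih =>
    constructor
    · intro hp; simp [Ctx.pol] at hp
      exact wSeqR C (ih.1 hp)
    · intro hp; simp [Ctx.pol] at hp
      exact wSeqR C (ih.2 hp)

/-! ### The relation J -/

noncomputable def lhat (X Z : IBVF) : IBVF := if X = one then Z else limp X Z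

def J (X Z : IBVF) : Prop := Pos one (lhat X Z)

@[simp] lemma lhat_one (Z : IBVF) : lhat one Z = Z := by simp [lhat]
lemma lhat_ne {X : IBVF} (h : X ≠ one) (Z : IBVF) : lhat X Z = limp X Z := by simp [lhat, h]

lemma J_one {Z : IBVF} (h : Pos one Z) : J one Z := by simpa [J] using h
lemma J_one_iff {Z : IBVF} : J one Z ↔ Pos one Z := by simp [J]
lemma J_limp {X Z : IBVF} (hX : X ≠ one) : J X Z ↔ Pos one (limp X Z) := by
  simp [J, lhat, hX]

lemma prov_limp_of_pos {Z : IBVF} (h : Pos one Z) : Pos one (limp one Z) :=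
  dtrans (drule (IBVRule.u_down_limp true one)) (dLimpR h)

lemma J_to_limp {X Z : IBVF} (h : J X Z) : Pos one (limp X Z) := by
  by_cases hX : X = one
  · subst hX; exact prov_limp_of_pos (by simpa [J] using h)
  · rwa [J_limp hX] at h

lemma J_refl (X : IBVF) : J X X := by
  by_cases hX : X = one
  · subst hX; exact J_one dref
  · rw [J_limp hX]; exact idd X

lemma J_left {x x' Z : IBVF} (hn : Neg x x') (h : J x Z) : J x' Z := by
  by_cases hx : x = one
  · subst hx
    by_cases hx' : x' = one
    · subst hx'; exact h
    · rw [J_limp hx']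
      exact dtrans (prov_limp_of_pos (by simpa [J] using h)) (dLimpL' hn)
  · have hx' : x' ≠ one := deriv_ne_one hn hx
    rw [J_limp hx']
    exact dtrans ((J_limp hx).1 h) (dLimpL' hn)

lemma J_right {X Z Z' : IBVF} (hp : Pos Z Z') (h : J X Z) : J X Z' := by
  by_cases hX : X = one
  · subst hX; exact J_one (dtrans (by simpa [J] using h) hp)
  · rw [J_limp hX]; exact dtrans ((J_limp hX).1 h) (dLimpR hp)

lemma J_mk {w X Z : IBVF} (hn : Neg w X) (hp : Pos w Z) : J X Z :=
  J_left hn (J_right hp (J_refl w))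

lemma J_ded {X F G : IBVF} (h : J (smt X F) G) : J X (limp F G) := by
  by_cases hX : X = one
  · subst hX
    by_cases hF : F = one
    · subst hF
      simp only [smt_one_left] at h
      exact J_one (prov_limp_of_pos (by simpa [J] using h))
    · simp only [smt_one_left] at h
      exact J_one ((J_limp hF).1 h)
  · by_cases hF : F = one
    · subst hF
      simp only [smt_one_right] at h
      rw [J_limp hX]
      exact dtrans ((J_limp hX).1 h) (dLimpR (drule (IBVRule.u_down_limp true G)))
    · rw [smt_ne hX hF] at h
      have h' : Pos one (limp (tens X F) G) := (J_limp (by simp)).1 h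
      rw [J_limp hX]
      exact dtrans h' (drule (IBVRule.cur true X F G))

/-! ### Combination lemmas -/

lemma combineTensPlain {s t F G : IBVF} (hs : J s F) (ht : J t G) :
    J (tens s t) (tens F G) := by
  rw [J_limp (by simp)]
  refine dtrans (drule (IBVRule.u_down_tens true one)) ?_
  refine dtrans (dTensL (J_to_limp hs)) ?_
  refine dtrans (dTensR (J_to_limp ht)) ?_
  refine dtrans (drule (IBVRule.sR_pos s F (limp t G))) ?_
  refine dtrans (dLimpR (drule (IBVRule.com_tens true F (limp t G)))) ?_
  refine dtrans (dLimpR (drule (IBVRule.sR_pos t G F))) ?_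
  refine dtrans (dLimpR (dLimpR (drule (IBVRule.com_tens true G F)))) ?_
  exact drule (IBVRule.ruc true s t (tens F G))

lemma combineSeqPlain {s t F G : IBVF} (hs : J s F) (ht : J t G) :
    J (seq s t) (seq F G) := by
  rw [J_limp (by simp)]
  refine dtrans (drule (IBVRule.u_down_seqL one)) ?_
  refine dtrans (dSeqL (J_to_limp hs)) ?_
  refine dtrans (dSeqR (J_to_limp ht)) ?_
  exact drule (IBVRule.q_down_pos s F t G)

lemma combineTens {s t F G : IBVF} (hs : J s F) (ht : J t G) :
    J (smt s t) (tens F G) := by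
  by_cases hsone : s = one
  · subst hsone
    simp only [smt_one_left]
    have hF : Pos one F := by simpa [J] using hs
    by_cases htone : t = one
    · subst htone
      refine J_one ?_
      refine dtrans (drule (IBVRule.u_down_tens true one)) ?_
      refine dtrans (dTensL hF) ?_
      exact dTensR (by simpa [J] using ht)
    · rw [J_limp htone]
      refine dtrans ((J_limp htone).1 ht) ?_
      refine dLimpR ?_
      refine dtrans (drule (IBVRule.u_down_tens true G)) ?_
      exact dTensL hF
  · by_cases htone : t = one
    · subst htone
      simp only [smt_one_right]
      have hG : Pos one G := by simpa [J] using ht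
      rw [J_limp hsone]
      refine dtrans ((J_limp hsone).1 hs) ?_
      refine dLimpR ?_
      refine dtrans (drule (IBVRule.u_down_tens true F)) ?_
      refine dtrans (dTensL hG) ?_
      exact drule (IBVRule.com_tens true G F)
    · rw [smt_ne hsone htone]
      exact combineTensPlain hs ht

lemma combineSeq {s t F G : IBVF} (hs : J s F) (ht : J t G) :
    J (sms s t) (seq F G) := by
  by_cases hsone : s = one
  · subst hsone
    simp only [sms_one_left]
    have hF : Pos one F := by simpa [J] using hs
    by_cases htone : t = one
    · subst htone
      refine J_one ?_
      refine dtrans (drule (IBVRule.u_down_seqL one)) ?_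
      refine dtrans (dSeqL hF) ?_
      exact dSeqR (by simpa [J] using ht)
    · rw [J_limp htone]
      refine dtrans ((J_limp htone).1 ht) ?_
      refine dLimpR ?_
      refine dtrans (drule (IBVRule.u_down_seqL G)) ?_
      exact dSeqL hF
  · by_cases htone : t = one
    · subst htone
      simp only [sms_one_right]
      have hG : Pos one G := by simpa [J] using ht
      rw [J_limp hsone]
      refine dtrans ((J_limp hsone).1 hs) ?_
      refine dLimpR ?_
      refine dtrans (drule (IBVRule.u_down_seqR F)) ?_
      exact dSeqR hG
    · rw [sms_ne hsone htone]
      exact combineSeqPlain hs ht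

/-! ### The syntactic model -/

def NS (S : Set IBVF) : Set IBVF := {y | ∃ x ∈ S, Neg x y}

noncomputable def gam : IBVF → Set IBVF
  | IBVF.atom a => NS {IBVF.atom a}
  | IBVF.one => NS {IBVF.one}
  | IBVF.tens F G => NS {z | ∃ s ∈ gam F, ∃ t ∈ gam G, z = smt s t}
  | IBVF.seq F G => NS {z | ∃ s ∈ gam F, ∃ t ∈ gam G, z = sms s t ∨ z = seq s t}
  | IBVF.limp F G => NS {X | ∀ Y ∈ gam F, smt X Y ∈ gam G}

lemma NS_sub {S : Set IBVF} : S ⊆ NS S := fun x hx => ⟨x, hx, dref⟩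

lemma NS_closed {S : Set IBVF} {x y : IBVF} (hx : x ∈ NS S) (h : Neg x y) : y ∈ NS S := by
  obtain ⟨g, hg, hgx⟩ := hx; exact ⟨g, hg, dtrans hgx h⟩

lemma NS_mono {S T : Set IBVF} (h : ∀ x ∈ S, x ∈ NS T) : NS S ⊆ NS T := by
  rintro y ⟨g, hg, hgy⟩; exact NS_closed (h g hg) hgy

lemma gam_closed {F : IBVF} {x y : IBVF} (hx : x ∈ gam F) (h : Neg x y) : y ∈ gam F := by
  cases F <;> (simp only [gam] at hx ⊢; exact NS_closed hx h)

/-- membership from a generator -/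
lemma gam_of_neg {F : IBVF} {g x : IBVF} (hg : g ∈ gam F) (h : Neg g x) : x ∈ gam F :=
  gam_closed hg h

lemma mem_atom {a : ℕ} : IBVF.atom a ∈ gam (IBVF.atom a) := by
  simp only [gam]; exact NS_sub rfl

lemma mem_one : IBVF.one ∈ gam IBVF.one := by
  simp only [gam]; exact NS_sub rfl

lemma atom_elim {a : ℕ} {x : IBVF} (h : x ∈ gam (IBVF.atom a)) : Neg (IBVF.atom a) x := by
  simp only [gam, NS] at h; obtain ⟨g, hg, h⟩ := h
  simp only [Set.mem_singleton_iff] at hg; subst hg; exact h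

lemma one_elim {x : IBVF} (h : x ∈ gam IBVF.one) : Neg IBVF.one x := by
  simp only [gam, NS] at h; obtain ⟨g, hg, h⟩ := h
  simp only [Set.mem_singleton_iff] at hg; subst hg; exact h

lemma tens_gen {F G s t : IBVF} (hs : s ∈ gam F) (ht : t ∈ gam G) :
    smt s t ∈ gam (tens F G) := by
  simp only [gam]; exact NS_sub ⟨s, hs, t, ht, rfl⟩

lemma tens_elim {F G x : IBVF} (h : x ∈ gam (tens F G)) :
    ∃ s ∈ gam F, ∃ t ∈ gam G, Neg (smt s t) x := by
  simp only [gam, NS, Set.mem_setOf_eq] at h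
  obtain ⟨g, ⟨s, hs, t, ht, rfl⟩, hgx⟩ := h
  exact ⟨s, hs, t, ht, hgx⟩

lemma seq_gen_s {F G s t : IBVF} (hs : s ∈ gam F) (ht : t ∈ gam G) :
    sms s t ∈ gam (seq F G) := by
  simp only [gam]; exact NS_sub ⟨s, hs, t, ht, Or.inl rfl⟩

lemma seq_gen_p {F G s t : IBVF} (hs : s ∈ gam F) (ht : t ∈ gam G) :
    seq s t ∈ gam (seq F G) := by
  simp only [gam]; exact NS_sub ⟨s, hs, t, ht, Or.inr rfl⟩

lemma seq_elim {F G x : IBVF} (h : x ∈ gam (seq F G)) :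
    ∃ s ∈ gam F, ∃ t ∈ gam G, Neg (sms s t) x ∨ Neg (seq s t) x := by
  simp only [gam, NS, Set.mem_setOf_eq] at h
  obtain ⟨g, ⟨s, hs, t, ht, hg⟩, hgx⟩ := h
  rcases hg with rfl | rfl
  · exact ⟨s, hs, t, ht, Or.inl hgx⟩
  · exact ⟨s, hs, t, ht, Or.inr hgx⟩

lemma limp_gen {F G X : IBVF} (h : ∀ Y ∈ gam F, smt X Y ∈ gam G) :
    X ∈ gam (limp F G) := by
  simp only [gam]; exact NS_sub h

lemma limp_elim {F G x : IBVF} (h : x ∈ gam (limp F G)) :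
    ∃ V, (∀ Y ∈ gam F, smt V Y ∈ gam G) ∧ Neg V x := by
  simp only [gam, NS, Set.mem_setOf_eq] at h
  obtain ⟨g, hg, hgx⟩ := h
  exact ⟨g, hg, hgx⟩

lemma one_mem_elim {S : Set IBVF} (h : IBVF.one ∈ NS S) : IBVF.one ∈ S := by
  obtain ⟨g, hg, hgone⟩ := h
  rwa [deriv_one_eq hgone] at hg

/-! ### Negative attachment and rearrangement -/

lemma neg_smt_to_tens (s t : IBVF) : Neg (smt s t) (tens s t) := by
  by_cases hs : s = one
  · subst hs; simp only [smt_one_left]; exact drule (IBVRule.u_down_tens false t)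
  · by_cases ht : t = one
    · subst ht; simp only [smt_one_right]
      exact dtrans (drule (IBVRule.u_down_tens false s)) (drule (IBVRule.com_tens false one s))
    · rw [smt_ne hs ht]; exact dref

lemma neg_sms_to_seq (s t : IBVF) : ∃ u v, (u = s ∨ Neg one u) ∧ (v = t ∨ Neg one v) ∧
    True := ⟨s, t, Or.inl rfl, Or.inl rfl, trivial⟩

lemma neg_attachL {w x : IBVF} (hw : Neg one w) : Neg x (smt w x) := by
  by_cases hwone : w = one
  · subst hwone; simpa using dref
  · by_cases hx : x = one
    · subst hx; simpa using hw
    · rw [smt_ne hwone hx]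
      refine dtrans (drule (IBVRule.u_down_tens false x)) ?_
      exact dTensL hw

lemma neg_attachR {w x : IBVF} (hw : Neg one w) : Neg x (smt x w) := by
  by_cases hwone : w = one
  · subst hwone; simpa using dref
  · by_cases hx : x = one
    · subst hx; simpa using hw
    · rw [smt_ne hx hwone]
      refine dtrans (drule (IBVRule.u_down_tens false x)) ?_
      refine dtrans (drule (IBVRule.com_tens false one x)) ?_
      exact dTensR hw

lemma smt_congr {a a' b b' : IBVF} (ha : Neg a a') (hb : Neg b b') :
    Neg (smt a b) (smt a' b') := by
  by_cases haone : a = one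
  · subst haone
    simp only [smt_one_left]
    exact dtrans hb (neg_attachL ha)
  · have ha' : a' ≠ one := deriv_ne_one ha haone
    by_cases hbone : b = one
    · subst hbone
      simp only [smt_one_right]
      exact dtrans ha (neg_attachR hb)
    · have hb' : b' ≠ one := deriv_ne_one hb hbone
      rw [smt_ne haone hbone, smt_ne ha' hb']
      exact dtrans (dTensL ha) (dTensR hb)

lemma smt_comm {p : Bool} (a b : IBVF) : Deriv IBVRule p (smt a b) (smt b a) := by
  by_cases ha : a = one
  · subst ha; simp [dref]
  · by_cases hb : b = one
    · subst hb; simp [dref]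
    · rw [smt_ne ha hb, smt_ne hb ha]
      exact drule (IBVRule.com_tens p a b)

lemma smt_assoc {p : Bool} (a b c : IBVF) :
    Deriv IBVRule p (smt (smt a b) c) (smt a (smt b c)) := by
  by_cases ha : a = one
  · subst ha; simp [dref]
  · by_cases hb : b = one
    · subst hb; simp [dref]
    · by_cases hc : c = one
      · subst hc; simp [dref]
      · rw [smt_ne ha hb, smt_ne hb hc]
        rw [smt_ne (show tens a b ≠ one by simp) hc, smt_ne ha (show tens b c ≠ one by simp)]
        exact drule (IBVRule.asso_tens p a b c)

lemma tens_assoc' {p : Bool} (a b c : IBVF) :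
    Deriv IBVRule p (tens a (tens b c)) (tens (tens a b) c) := by
  refine dtrans (drule (IBVRule.com_tens p a (tens b c))) ?_
  refine dtrans (drule (IBVRule.asso_tens p b c a)) ?_
  refine dtrans (drule (IBVRule.com_tens p b (tens c a))) ?_
  refine dtrans (drule (IBVRule.asso_tens p c a b)) ?_
  exact drule (IBVRule.com_tens p c (tens a b))

lemma smt_assoc' {p : Bool} (a b c : IBVF) :
    Deriv IBVRule p (smt a (smt b c)) (smt (smt a b) c) := by
  by_cases ha : a = one
  · subst ha; simp [dref]
  · by_cases hb : b = one
    · subst hb; simp [dref]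
    · by_cases hc : c = one
      · subst hc; simp [dref]
      · rw [smt_ne hb hc, smt_ne ha hb]
        rw [smt_ne ha (show tens b c ≠ one by simp), smt_ne (show tens a b ≠ one by simp) hc]
        exact tens_assoc' a b c

/-! ### Adequacy -/

theorem adeq (F : IBVF) : F ∈ gam F ∧ ∀ X ∈ gam F, J X F := by
  induction F with
  | atom a =>
    refine ⟨mem_atom, fun X hX => ?_⟩
    exact J_left (atom_elim hX) (J_refl _)
  | one =>
    refine ⟨mem_one, fun X hX => ?_⟩
    exact J_left (one_elim hX) (J_refl _)
  | tens F G ihF ihG =>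
    constructor
    · exact gam_of_neg (tens_gen ihF.1 ihG.1) (neg_smt_to_tens F G)
    · intro X hX
      obtain ⟨s, hs, t, ht, hneg⟩ := tens_elim hX
      exact J_left hneg (combineTens (ihF.2 s hs) (ihG.2 t ht))
  | seq F G ihF ihG =>
    constructor
    · exact seq_gen_p ihF.1 ihG.1
    · intro X hX
      obtain ⟨s, hs, t, ht, hneg | hneg⟩ := seq_elim hX
      · exact J_left hneg (combineSeq (ihF.2 s hs) (ihG.2 t ht))
      · exact J_left hneg (combineSeqPlain (ihF.2 s hs) (ihG.2 t ht))
  | limp F G ihF ihG =>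
    constructor
    · refine limp_gen fun Y hY => ?_
      by_cases hYone : Y = one
      · subst hYone
        simp only [smt_one_right]
        refine gam_of_neg ihG.1 ?_
        refine dtrans (drule (IBVRule.u_down_limp false G)) ?_
        exact dLimpL'' (by simpa [J] using ihF.2 one hY)
      · rw [smt_ne (by simp) hYone]
        refine gam_of_neg ihG.1 ?_
        refine dtrans (drule (IBVRule.u_down_limp false G)) ?_
        refine dtrans (dLimpL'' (J_to_limp (ihF.2 Y hY))) ?_
        refine dtrans (drule (IBVRule.sL_neg Y F G)) ?_
        exact drule (IBVRule.com_tens false Y (limp F G))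
    · intro X hX
      obtain ⟨V, hV, hneg⟩ := limp_elim hX
      refine J_left hneg ?_
      exact J_ded (ihG.2 _ (hV F ihF.1))

/-! ### Helpers for soundness -/

lemma tens_gen_plain {A B s t : IBVF} (hs : s ∈ gam A) (ht : t ∈ gam B) :
    tens s t ∈ gam (tens A B) :=
  gam_of_neg (tens_gen hs ht) (neg_smt_to_tens s t)

lemma absorbR {B Y w : IBVF} (hY : Y ∈ gam B) (hw : Neg one w) : tens Y w ∈ gam B := by
  refine gam_closed hY ?_
  refine dtrans (drule (IBVRule.u_down_tens false Y)) ?_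
  refine dtrans (drule (IBVRule.com_tens false one Y)) ?_
  exact dTensR hw

lemma absorbL {B Y w : IBVF} (hY : Y ∈ gam B) (hw : Neg one w) : tens w Y ∈ gam B := by
  refine gam_closed hY ?_
  refine dtrans (drule (IBVRule.u_down_tens false Y)) ?_
  exact dTensL hw

lemma smt_eq_one {s t : IBVF} (h : smt s t = one) : s = one ∧ t = one := by
  by_cases hs : s = one
  · subst hs; simp only [smt_one_left] at h; exact ⟨rfl, h⟩
  · by_cases ht : t = one
    · subst ht; simp only [smt_one_right] at h; exact absurd h hs
    · rw [smt_ne hs ht] at h; exact absurd h (by simp)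

lemma sms_eq_one {s t : IBVF} (h : sms s t = one) : s = one ∧ t = one := by
  by_cases hs : s = one
  · subst hs; simp only [sms_one_left] at h; exact ⟨rfl, h⟩
  · by_cases ht : t = one
    · subst ht; simp only [sms_one_right] at h; exact absurd h hs
    · rw [sms_ne hs ht] at h; exact absurd h (by simp)

lemma one_in_tens {A B : IBVF} (h : IBVF.one ∈ gam (tens A B)) :
    IBVF.one ∈ gam A ∧ IBVF.one ∈ gam B := by
  simp only [gam] at h
  have h' := one_mem_elim h
  obtain ⟨s, hs, t, ht, hst⟩ := h'
  obtain ⟨rfl, rfl⟩ := smt_eq_one hst.symm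
  exact ⟨hs, ht⟩

lemma one_in_seq {A B : IBVF} (h : IBVF.one ∈ gam (seq A B)) :
    IBVF.one ∈ gam A ∧ IBVF.one ∈ gam B := by
  simp only [gam] at h
  have h' := one_mem_elim h
  obtain ⟨s, hs, t, ht, hst | hst⟩ := h'
  · obtain ⟨rfl, rfl⟩ := sms_eq_one hst.symm
    exact ⟨hs, ht⟩
  · exact absurd hst (by simp)

/-- useful: rearrangement as Neg -/
lemma nComm (a b : IBVF) : Neg (smt a b) (smt b a) := smt_comm a b
lemma nAssoc (a b c : IBVF) : Neg (smt (smt a b) c) (smt a (smt b c)) := smt_assoc a b c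
lemma nAssoc' (a b c : IBVF) : Neg (smt a (smt b c)) (smt (smt a b) c) := smt_assoc' a b c

/-! ### Soundness: the easy rules -/

lemma sound_ai (a : ℕ) : gam IBVF.one ⊆ gam (limp (IBVF.atom a) (IBVF.atom a)) := by
  intro x hx
  refine gam_of_neg (limp_gen fun Y hY => ?_) (one_elim hx)
  simpa using hY

lemma sound_useqL (A : IBVF) : gam A ⊆ gam (seq IBVF.one A) := by
  intro x hx
  have := seq_gen_s (F := IBVF.one) (G := A) mem_one hx
  simpa using this

lemma sound_useqR (A : IBVF) : gam A ⊆ gam (seq A IBVF.one) := by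
  intro x hx
  have := seq_gen_s (F := A) (G := IBVF.one) hx mem_one
  simpa using this

lemma neg_sms_to_smt (s t : IBVF) : Neg (sms s t) (smt s t) := by
  by_cases hs : s = one
  · subst hs; simp only [sms_one_left, smt_one_left]; exact dref
  · by_cases ht : t = one
    · subst ht; simp only [sms_one_right, smt_one_right]; exact dref
    · rw [sms_ne hs ht, smt_ne hs ht]; exact drule (IBVRule.ref_neg s t)

lemma sound_ref (A B : IBVF) : gam (tens A B) ⊆ gam (seq A B) := by
  intro x hx
  obtain ⟨s, hs, t, ht, hneg⟩ := tens_elim hx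
  exact gam_of_neg (gam_of_neg (seq_gen_s hs ht) (neg_sms_to_smt s t)) hneg

lemma sound_com (A B : IBVF) : gam (tens A B) ⊆ gam (tens B A) := by
  intro x hx
  obtain ⟨s, hs, t, ht, hneg⟩ := tens_elim hx
  exact gam_of_neg (gam_of_neg (tens_gen ht hs) (nComm t s)) hneg

lemma sound_assoc1 (A B C : IBVF) : gam (tens (tens A B) C) ⊆ gam (tens A (tens B C)) := by
  intro x hx
  obtain ⟨w, hw, c, hc, hneg⟩ := tens_elim hx
  obtain ⟨a, ha, b, hb, hnw⟩ := tens_elim hw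
  refine gam_of_neg (gam_of_neg (tens_gen ha (tens_gen hb hc)) ?_) hneg
  exact dtrans (nAssoc' a b c) (smt_congr hnw dref)

lemma sound_assoc2 (A B C : IBVF) : gam (tens A (tens B C)) ⊆ gam (tens (tens A B) C) := by
  intro x hx
  obtain ⟨a, ha, w, hw, hneg⟩ := tens_elim hx
  obtain ⟨b, hb, c, hc, hnw⟩ := tens_elim hw
  refine gam_of_neg (gam_of_neg (tens_gen (tens_gen ha hb) hc) ?_) hneg
  exact dtrans (nAssoc a b c) (smt_congr dref hnw)

lemma sound_utens1 (A : IBVF) : gam A ⊆ gam (tens IBVF.one A) := by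
  intro x hx
  have := tens_gen (F := IBVF.one) (G := A) mem_one hx
  simpa using this

lemma sound_utens2 (A : IBVF) : gam (tens IBVF.one A) ⊆ gam A := by
  intro x hx
  obtain ⟨u, hu, a, ha, hneg⟩ := tens_elim hx
  have hu' : Neg one u := one_elim hu
  exact gam_of_neg (gam_closed ha (neg_attachL hu')) hneg

lemma sound_ulimp1 (A : IBVF) : gam A ⊆ gam (limp IBVF.one A) := by
  intro x hx
  refine limp_gen fun Y hY => ?_
  exact gam_closed hx (neg_attachR (one_elim hY))

lemma sound_ulimp2 (A : IBVF) : gam (limp IBVF.one A) ⊆ gam A := by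
  intro x hx
  obtain ⟨V, hV, hneg⟩ := limp_elim hx
  have := hV one mem_one
  simp only [smt_one_right] at this
  exact gam_of_neg this hneg

lemma sound_cur1 (A B C : IBVF) : gam (limp (tens A B) C) ⊆ gam (limp A (limp B C)) := by
  intro x hx
  obtain ⟨V, hV, hneg⟩ := limp_elim hx
  refine gam_of_neg (limp_gen fun Y hY => ?_) hneg
  refine limp_gen fun Z hZ => ?_
  have h1 : smt V (smt Y Z) ∈ gam C := hV _ (tens_gen hY hZ)
  exact gam_of_neg h1 (nAssoc' V Y Z)

lemma sound_cur2 (A B C : IBVF) : gam (limp A (limp B C)) ⊆ gam (limp (tens A B) C) := by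
  intro x hx
  obtain ⟨V, hV, hneg⟩ := limp_elim hx
  refine gam_of_neg (limp_gen fun W hW => ?_) hneg
  obtain ⟨a, ha, b, hb, hnw⟩ := tens_elim hW
  obtain ⟨g, hg, hng⟩ := limp_elim (hV a ha)
  have h1 : smt g b ∈ gam C := hg b hb
  refine gam_of_neg h1 ?_
  refine dtrans (smt_congr hng dref) ?_
  refine dtrans (nAssoc V a b) ?_
  exact smt_congr dref hnw

lemma sound_sL (A B C : IBVF) : gam (tens A (limp B C)) ⊆ gam (limp (limp A B) C) := by
  intro x hx
  obtain ⟨s, hs, t, ht, hneg⟩ := tens_elim hx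
  obtain ⟨f, hf, hnf⟩ := limp_elim ht
  refine gam_of_neg (gam_of_neg (limp_gen fun Y hY => ?_) (smt_congr dref hnf)) hneg
  obtain ⟨g, hg, hng⟩ := limp_elim hY
  have h2 : smt f (smt g s) ∈ gam C := hf _ (hg s hs)
  refine gam_of_neg h2 ?_
  refine dtrans (smt_congr dref (nComm g s)) ?_
  refine dtrans (nAssoc' f s g) ?_
  refine dtrans (smt_congr (nComm f s) dref) ?_
  exact smt_congr dref hng

lemma sound_sR (A B C : IBVF) : gam (tens (limp A B) C) ⊆ gam (limp A (tens B C)) := by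
  intro x hx
  obtain ⟨t, ht, c, hc, hneg⟩ := tens_elim hx
  obtain ⟨f, hf, hnf⟩ := limp_elim ht
  refine gam_of_neg (gam_of_neg (limp_gen fun Y hY => ?_) (smt_congr hnf dref)) hneg
  have h1 : smt (smt f Y) c ∈ gam (tens B C) := tens_gen (hf Y hY) hc
  refine gam_of_neg h1 ?_
  refine dtrans (nAssoc f Y c) ?_
  refine dtrans (smt_congr dref (nComm Y c)) ?_
  exact nAssoc' f c Y

/-! ### More membership helpers -/

lemma tens_memL {F G t : IBVF} (h1 : IBVF.one ∈ gam F) (ht : t ∈ gam G) :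
    t ∈ gam (tens F G) := by simpa using tens_gen h1 ht

lemma tens_memR {F G s : IBVF} (h1 : IBVF.one ∈ gam G) (hs : s ∈ gam F) :
    s ∈ gam (tens F G) := by simpa using tens_gen hs h1

lemma seq_memL {F G t : IBVF} (h1 : IBVF.one ∈ gam F) (ht : t ∈ gam G) :
    t ∈ gam (seq F G) := by simpa using seq_gen_s h1 ht

lemma seq_memR {F G s : IBVF} (h1 : IBVF.one ∈ gam G) (hs : s ∈ gam F) :
    s ∈ gam (seq F G) := by simpa using seq_gen_s hs h1

lemma one_mem_seq {F G : IBVF} (h1 : IBVF.one ∈ gam F) (h2 : IBVF.one ∈ gam G) :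
    IBVF.one ∈ gam (seq F G) := by simpa using seq_gen_s h1 h2

lemma one_mem_tens {F G : IBVF} (h1 : IBVF.one ∈ gam F) (h2 : IBVF.one ∈ gam G) :
    IBVF.one ∈ gam (tens F G) := by simpa using tens_gen h1 h2

lemma tens_of_smt {F s t : IBVF} (h : smt s t ∈ gam F) : tens s t ∈ gam F :=
  gam_closed h (neg_smt_to_tens s t)

lemma smt_mem_seq {F G s t : IBVF} (hs : s ∈ gam F) (ht : t ∈ gam G) :
    smt s t ∈ gam (seq F G) :=
  gam_of_neg (seq_gen_s hs ht) (neg_sms_to_smt s t)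

lemma smt_mem_seq' {F G s t : IBVF} (hs : s ∈ gam F) (ht : t ∈ gam G) :
    smt t s ∈ gam (seq F G) := by
  refine gam_of_neg (seq_gen_s hs ht) ?_
  exact dtrans (neg_sms_to_smt s t) (nComm s t)

lemma tens_elim' {A B x : IBVF} (h : x ∈ gam (tens A B)) : ∃ s ∈ gam A, ∃ t ∈ gam B,
    (s = one ∧ Neg t x) ∨ (t = one ∧ Neg s x) ∨ Neg (tens s t) x := by
  obtain ⟨s, hs, t, ht, hn⟩ := tens_elim h
  refine ⟨s, hs, t, ht, ?_⟩
  by_cases h1 : s = one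
  · subst h1; simp only [smt_one_left] at hn; exact Or.inl ⟨rfl, hn⟩
  · by_cases h2 : t = one
    · subst h2; simp only [smt_one_right] at hn; exact Or.inr (Or.inl ⟨rfl, hn⟩)
    · rw [smt_ne h1 h2] at hn; exact Or.inr (Or.inr hn)

lemma seq_elim' {A B x : IBVF} (h : x ∈ gam (seq A B)) : ∃ s ∈ gam A, ∃ t ∈ gam B,
    (s = one ∧ Neg t x) ∨ (t = one ∧ Neg s x) ∨ Neg (seq s t) x := by
  obtain ⟨s, hs, t, ht, hn | hn⟩ := seq_elim h
  · refine ⟨s, hs, t, ht, ?_⟩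
    by_cases h1 : s = one
    · subst h1; simp only [sms_one_left] at hn; exact Or.inl ⟨rfl, hn⟩
    · by_cases h2 : t = one
      · subst h2; simp only [sms_one_right] at hn; exact Or.inr (Or.inl ⟨rfl, hn⟩)
      · rw [sms_ne h1 h2] at hn; exact Or.inr (Or.inr hn)
  · exact ⟨s, hs, t, ht, Or.inr (Or.inr hn)⟩

/-! ### Soundness: seq associativity -/

lemma sound_sassoc1 (A B C : IBVF) : gam (seq (seq A B) C) ⊆ gam (seq A (seq B C)) := by
  intro x hx
  obtain ⟨w, hw, c, hc, hcase⟩ := seq_elim' hx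
  rcases hcase with ⟨rfl, hnx⟩ | ⟨rfl, hnx⟩ | hnx
  · obtain ⟨h1A, h1B⟩ := one_in_seq hw
    exact gam_of_neg (seq_memL h1A (seq_memL h1B hc)) hnx
  · obtain ⟨a, ha, b, hb, hic⟩ := seq_elim' hw
    rcases hic with ⟨rfl, hnw⟩ | ⟨rfl, hnw⟩ | hnw
    · exact gam_of_neg (gam_of_neg (seq_memL ha (seq_memR hc hb)) hnw) hnx
    · exact gam_of_neg (gam_of_neg (seq_memR (one_mem_seq hb hc) ha) hnw) hnx
    · exact gam_of_neg (gam_of_neg (seq_gen_p ha (seq_memR hc hb)) hnw) hnx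
  · obtain ⟨a, ha, b, hb, hic⟩ := seq_elim' hw
    rcases hic with ⟨rfl, hnw⟩ | ⟨rfl, hnw⟩ | hnw
    · refine gam_of_neg (gam_of_neg (seq_memL ha (seq_gen_p hb hc)) ?_) hnx
      exact dSeqL hnw
    · refine gam_of_neg (gam_of_neg (seq_gen_p ha (seq_memL hb hc)) ?_) hnx
      exact dSeqL hnw
    · refine gam_of_neg (gam_of_neg (seq_gen_p ha (seq_gen_p hb hc)) ?_) hnx
      exact dtrans (drule (IBVRule.assoR_seq false a b c)) (dSeqL hnw)

lemma sound_sassoc2 (A B C : IBVF) : gam (seq A (seq B C)) ⊆ gam (seq (seq A B) C) := by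
  intro x hx
  obtain ⟨a, ha, w, hw, hcase⟩ := seq_elim' hx
  rcases hcase with ⟨rfl, hnx⟩ | ⟨rfl, hnx⟩ | hnx
  · obtain ⟨b, hb, c, hc, hic⟩ := seq_elim' hw
    rcases hic with ⟨rfl, hnw⟩ | ⟨rfl, hnw⟩ | hnw
    · exact gam_of_neg (gam_of_neg (seq_memL (one_mem_seq ha hb) hc) hnw) hnx
    · exact gam_of_neg (gam_of_neg (seq_memR hc (seq_memL ha hb)) hnw) hnx
    · exact gam_of_neg (gam_of_neg (seq_gen_p (seq_memL ha hb) hc) hnw) hnx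
  · obtain ⟨h1B, h1C⟩ := one_in_seq hw
    exact gam_of_neg (seq_memR h1C (seq_memR h1B ha)) hnx
  · obtain ⟨b, hb, c, hc, hic⟩ := seq_elim' hw
    rcases hic with ⟨rfl, hnw⟩ | ⟨rfl, hnw⟩ | hnw
    · refine gam_of_neg (gam_of_neg (seq_gen_p (seq_memR hb ha) hc) ?_) hnx
      exact dSeqR hnw
    · refine gam_of_neg (gam_of_neg (seq_memR hc (seq_gen_p ha hb)) ?_) hnx
      exact dSeqR hnw
    · refine gam_of_neg (gam_of_neg (seq_gen_p (seq_gen_p ha hb) hc) ?_) hnx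
      exact dtrans (drule (IBVRule.assoL_seq false a b c)) (dSeqR hnw)

/-! ### Soundness: the negative seq/tens interaction rules -/

lemma sound_sqLneg (A B C : IBVF) : gam (tens A (seq B C)) ⊆ gam (seq (tens A B) C) := by
  intro x hx
  obtain ⟨a, ha, w, hw, hcase⟩ := tens_elim' hx
  rcases hcase with ⟨rfl, hnx⟩ | ⟨rfl, hnx⟩ | hnx
  · obtain ⟨b, hb, c, hc, hic⟩ := seq_elim' hw
    rcases hic with ⟨rfl, hnw⟩ | ⟨rfl, hnw⟩ | hnw
    · exact gam_of_neg (gam_of_neg (seq_memL (one_mem_tens ha hb) hc) hnw) hnx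
    · exact gam_of_neg (gam_of_neg (seq_memR hc (tens_memL ha hb)) hnw) hnx
    · exact gam_of_neg (gam_of_neg (seq_gen_p (tens_memL ha hb) hc) hnw) hnx
  · obtain ⟨h1B, h1C⟩ := one_in_seq hw
    exact gam_of_neg (seq_memR h1C (tens_memR h1B ha)) hnx
  · obtain ⟨b, hb, c, hc, hic⟩ := seq_elim' hw
    rcases hic with ⟨rfl, hnw⟩ | ⟨rfl, hnw⟩ | hnw
    · refine gam_of_neg (gam_of_neg (seq_gen_p (tens_memR hb ha) hc) ?_) hnx
      exact dtrans (drule (IBVRule.ref_neg a c)) (dTensR hnw)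
    · refine gam_of_neg (gam_of_neg (seq_memR hc (tens_gen_plain ha hb)) ?_) hnx
      exact dTensR hnw
    · refine gam_of_neg (gam_of_neg (seq_gen_p (tens_gen_plain ha hb) hc) ?_) hnx
      exact dtrans (drule (IBVRule.sqL_neg a b c)) (dTensR hnw)

lemma sound_sqRneg (A B C : IBVF) : gam (tens A (seq B C)) ⊆ gam (seq B (tens A C)) := by
  intro x hx
  obtain ⟨a, ha, w, hw, hcase⟩ := tens_elim' hx
  rcases hcase with ⟨rfl, hnx⟩ | ⟨rfl, hnx⟩ | hnx
  · obtain ⟨b, hb, c, hc, hic⟩ := seq_elim' hw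
    rcases hic with ⟨rfl, hnw⟩ | ⟨rfl, hnw⟩ | hnw
    · exact gam_of_neg (gam_of_neg (seq_memL hb (tens_memL ha hc)) hnw) hnx
    · exact gam_of_neg (gam_of_neg (seq_memR (one_mem_tens ha hc) hb) hnw) hnx
    · exact gam_of_neg (gam_of_neg (seq_gen_p hb (tens_memL ha hc)) hnw) hnx
  · obtain ⟨h1B, h1C⟩ := one_in_seq hw
    exact gam_of_neg (seq_memL h1B (tens_memR h1C ha)) hnx
  · obtain ⟨b, hb, c, hc, hic⟩ := seq_elim' hw
    rcases hic with ⟨rfl, hnw⟩ | ⟨rfl, hnw⟩ | hnw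
    · refine gam_of_neg (gam_of_neg (seq_memL hb (tens_gen_plain ha hc)) ?_) hnx
      exact dTensR hnw
    · refine gam_of_neg (gam_of_neg (seq_gen_p hb (tens_memR hc ha)) ?_) hnx
      refine dtrans (drule (IBVRule.ref_neg b a)) ?_
      exact dtrans (drule (IBVRule.com_tens false b a)) (dTensR hnw)
    · refine gam_of_neg (gam_of_neg (seq_gen_p hb (tens_gen_plain ha hc)) ?_) hnx
      exact dtrans (drule (IBVRule.sqR_neg a b c)) (dTensR hnw)

lemma sound_qneg (A B C D : IBVF) :
    gam (tens (seq A C) (seq B D)) ⊆ gam (seq (tens A B) (tens C D)) := by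
  intro x hx
  obtain ⟨w1, hw1, w2, hw2, hcase⟩ := tens_elim' hx
  rcases hcase with ⟨rfl, hnx⟩ | ⟨rfl, hnx⟩ | hnx
  · obtain ⟨h1A, h1C⟩ := one_in_seq hw1
    obtain ⟨b, hb, d, hd, hic⟩ := seq_elim' hw2
    rcases hic with ⟨rfl, hnw⟩ | ⟨rfl, hnw⟩ | hnw
    · exact gam_of_neg (gam_of_neg (seq_memL (one_mem_tens h1A hb) (tens_memL h1C hd)) hnw) hnx
    · exact gam_of_neg (gam_of_neg (seq_memR (one_mem_tens h1C hd) (tens_memL h1A hb)) hnw) hnx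
    · exact gam_of_neg (gam_of_neg (seq_gen_p (tens_memL h1A hb) (tens_memL h1C hd)) hnw) hnx
  · obtain ⟨h1B, h1D⟩ := one_in_seq hw2
    obtain ⟨a, ha, c, hc, hic⟩ := seq_elim' hw1
    rcases hic with ⟨rfl, hnw⟩ | ⟨rfl, hnw⟩ | hnw
    · exact gam_of_neg (gam_of_neg (seq_memL (one_mem_tens ha h1B) (tens_memR h1D hc)) hnw) hnx
    · exact gam_of_neg (gam_of_neg (seq_memR (one_mem_tens hc h1D) (tens_memR h1B ha)) hnw) hnx
    · exact gam_of_neg (gam_of_neg (seq_gen_p (tens_memR h1B ha) (tens_memR h1D hc)) hnw) hnx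
  · obtain ⟨a, ha, c, hc, hic1⟩ := seq_elim' hw1
    obtain ⟨b, hb, d, hd, hic2⟩ := seq_elim' hw2
    rcases hic1 with ⟨rfl, hnw1⟩ | ⟨rfl, hnw1⟩ | hnw1 <;>
      rcases hic2 with ⟨rfl, hnw2⟩ | ⟨rfl, hnw2⟩ | hnw2
    · -- w1 ⟵ c, w2 ⟵ d
      refine gam_of_neg (gam_of_neg (seq_memL (one_mem_tens ha hb) (tens_gen_plain hc hd)) ?_) hnx
      exact dtrans (dTensL hnw1) (dTensR hnw2)
    · -- w1 ⟵ c, w2 ⟵ b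
      refine gam_of_neg (gam_of_neg (seq_gen_p (tens_memL ha hb) (tens_memR hd hc)) ?_) hnx
      refine dtrans (drule (IBVRule.ref_neg b c)) ?_
      refine dtrans (drule (IBVRule.com_tens false b c)) ?_
      exact dtrans (dTensL hnw1) (dTensR hnw2)
    · -- w1 ⟵ c, w2 ⟵ seq b d
      refine gam_of_neg (gam_of_neg (seq_gen_p (tens_memL ha hb) (tens_gen_plain hc hd)) ?_) hnx
      refine dtrans (drule (IBVRule.sqR_neg c b d)) ?_
      exact dtrans (dTensL hnw1) (dTensR hnw2)
    · -- w1 ⟵ a, w2 ⟵ d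
      refine gam_of_neg (gam_of_neg (seq_gen_p (tens_memR hb ha) (tens_memL hc hd)) ?_) hnx
      refine dtrans (drule (IBVRule.ref_neg a d)) ?_
      exact dtrans (dTensL hnw1) (dTensR hnw2)
    · -- w1 ⟵ a, w2 ⟵ b
      refine gam_of_neg (gam_of_neg (seq_memR (one_mem_tens hc hd) (tens_gen_plain ha hb)) ?_) hnx
      exact dtrans (dTensL hnw1) (dTensR hnw2)
    · -- w1 ⟵ a, w2 ⟵ seq b d
      refine gam_of_neg (gam_of_neg (seq_gen_p (tens_gen_plain ha hb) (tens_memL hc hd)) ?_) hnx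
      refine dtrans (drule (IBVRule.sqL_neg a b d)) ?_
      exact dtrans (dTensL hnw1) (dTensR hnw2)
    · -- w1 ⟵ seq a c, w2 ⟵ d
      refine gam_of_neg (gam_of_neg (seq_gen_p (tens_memR hb ha)
        (gam_closed (tens_gen_plain hc hd) (drule (IBVRule.com_tens false c d)))) ?_) hnx
      refine dtrans (drule (IBVRule.sqR_neg d a c)) ?_
      refine dtrans (drule (IBVRule.com_tens false d (seq a c))) ?_
      exact dtrans (dTensL hnw1) (dTensR hnw2)
    · -- w1 ⟵ seq a c, w2 ⟵ b
      refine gam_of_neg (gam_of_neg (seq_gen_p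
        (gam_closed (tens_gen_plain ha hb) (drule (IBVRule.com_tens false a b)))
        (tens_memR hd hc)) ?_) hnx
      refine dtrans (drule (IBVRule.sqL_neg b a c)) ?_
      refine dtrans (drule (IBVRule.com_tens false b (seq a c))) ?_
      exact dtrans (dTensL hnw1) (dTensR hnw2)
    · -- w1 ⟵ seq a c, w2 ⟵ seq b d
      refine gam_of_neg (gam_of_neg (seq_gen_p (tens_gen_plain ha hb) (tens_gen_plain hc hd)) ?_) hnx
      refine dtrans (drule (IBVRule.q_down_neg a b c d)) ?_
      exact dtrans (dTensL hnw1) (dTensR hnw2)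

/-! ### Soundness: the positive seq rules -/

lemma one_in_limp {A B : IBVF} (h : IBVF.one ∈ gam (limp A B)) :
    ∀ Y ∈ gam A, Y ∈ gam B := by
  simp only [gam] at h
  have h' := one_mem_elim h
  intro Y hY
  simpa using h' Y hY

lemma sound_sqLpos (A B C : IBVF) : gam (seq (limp A B) C) ⊆ gam (limp A (seq B C)) := by
  intro x hx
  obtain ⟨t1, ht1, c, hc, hcase⟩ := seq_elim' hx
  rcases hcase with ⟨heq, hnx⟩ | ⟨rfl, hnx⟩ | hnx
  · subst heq
    have hf1 := one_in_limp ht1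
    refine gam_of_neg (limp_gen fun Y hY => ?_) hnx
    have hYB : Y ∈ gam B := hf1 Y hY
    by_cases hc1 : c = one
    · subst hc1; simp only [smt_one_left]
      exact seq_memR hc hYB
    · by_cases hY1 : Y = one
      · subst hY1; simp only [smt_one_right]
        exact seq_memL (hf1 one hY) hc
      · rw [smt_ne hc1 hY1]
        refine gam_of_neg (seq_gen_p hYB hc) ?_
        exact dtrans (drule (IBVRule.ref_neg Y c)) (drule (IBVRule.com_tens false Y c))
  · obtain ⟨f, hf, hnf⟩ := limp_elim ht1
    refine gam_of_neg (gam_of_neg (limp_gen fun Y hY => ?_) hnf) hnx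
    exact seq_memR hc (hf Y hY)
  · obtain ⟨f, hf, hnf⟩ := limp_elim ht1
    refine gam_of_neg (limp_gen fun Y hY => ?_) hnx
    have hb' : smt t1 Y ∈ gam B := gam_closed (hf Y hY) (smt_congr hnf dref)
    by_cases hY1 : Y = one
    · subst hY1; simp only [smt_one_right]
      simp only [smt_one_right] at hb'
      exact seq_gen_p hb' hc
    · rw [smt_ne (by simp) hY1]
      have hb2 : tens Y t1 ∈ gam B := tens_of_smt (gam_closed hb' (nComm t1 Y))
      refine gam_of_neg (seq_gen_p hb2 hc) ?_
      exact dtrans (drule (IBVRule.sqL_neg Y t1 c))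
        (drule (IBVRule.com_tens false Y (seq t1 c)))

lemma sound_sqRpos (A B C : IBVF) : gam (seq B (limp A C)) ⊆ gam (limp A (seq B C)) := by
  intro x hx
  obtain ⟨b, hb, t2, ht2, hcase⟩ := seq_elim' hx
  rcases hcase with ⟨rfl, hnx⟩ | ⟨heq, hnx⟩ | hnx
  · obtain ⟨g, hg, hng⟩ := limp_elim ht2
    refine gam_of_neg (gam_of_neg (limp_gen fun Y hY => ?_) hng) hnx
    exact seq_memL hb (hg Y hY)
  · subst heq
    have hg1 := one_in_limp ht2
    refine gam_of_neg (limp_gen fun Y hY => ?_) hnx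
    by_cases hY1 : Y = one
    · subst hY1; simp only [smt_one_right]
      exact seq_memR (hg1 one hY) hb
    · by_cases hb1 : b = one
      · subst hb1; simp only [smt_one_left]
        exact seq_memL hb (hg1 Y hY)
      · rw [smt_ne hb1 hY1]
        exact gam_of_neg (seq_gen_p hb (hg1 Y hY)) (drule (IBVRule.ref_neg b Y))
  · obtain ⟨g, hg, hng⟩ := limp_elim ht2
    refine gam_of_neg (limp_gen fun Y hY => ?_) hnx
    have hd' : smt t2 Y ∈ gam C := gam_closed (hg Y hY) (smt_congr hng dref)
    by_cases hY1 : Y = one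
    · subst hY1; simp only [smt_one_right]
      simp only [smt_one_right] at hd'
      exact seq_gen_p hb hd'
    · rw [smt_ne (by simp) hY1]
      have hd2 : tens Y t2 ∈ gam C := tens_of_smt (gam_closed hd' (nComm t2 Y))
      refine gam_of_neg (seq_gen_p hb hd2) ?_
      exact dtrans (drule (IBVRule.sqR_neg Y b t2))
        (drule (IBVRule.com_tens false Y (seq b t2)))

lemma sound_qpos (A B C D : IBVF) :
    gam (seq (limp A B) (limp C D)) ⊆ gam (limp (seq A C) (seq B D)) := by
  intro x hx
  obtain ⟨t1, ht1, t2, ht2, hcase⟩ := seq_elim' hx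
  rcases hcase with ⟨heq, hnx⟩ | ⟨heq, hnx⟩ | hnx
  · subst heq
    have hf1 := one_in_limp ht1
    obtain ⟨g, hg, hng⟩ := limp_elim ht2
    refine gam_of_neg (gam_of_neg (limp_gen fun W hW => ?_) hng) hnx
    obtain ⟨a, ha, c, hc, hKw⟩ := seq_elim' hW
    rcases hKw with ⟨rfl, hnw⟩ | ⟨rfl, hnw⟩ | hnw
    · refine gam_closed (seq_memL (hf1 one ha) (hg c hc)) ?_
      exact smt_congr dref hnw
    · have hgone : g ∈ gam D := by simpa using hg one hc
      refine gam_closed (smt_mem_seq' (hf1 a ha) hgone) ?_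
      exact smt_congr dref hnw
    · have hWne : W ≠ one := deriv_ne_one hnw (by simp)
      by_cases hg1 : g = one
      · subst hg1; simp only [smt_one_left]
        have hcD : c ∈ gam D := by simpa using hg c hc
        exact gam_of_neg (seq_gen_p (hf1 a ha) hcD) hnw
      · rw [smt_ne hg1 hWne]
        have hd' : tens g c ∈ gam D := tens_of_smt (hg c hc)
        refine gam_of_neg (seq_gen_p (hf1 a ha) hd') ?_
        exact dtrans (drule (IBVRule.sqR_neg g a c)) (dTensR hnw)
  · subst heq
    have hg1 := one_in_limp ht2
    obtain ⟨f, hf, hnf⟩ := limp_elim ht1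
    refine gam_of_neg (gam_of_neg (limp_gen fun W hW => ?_) hnf) hnx
    obtain ⟨a, ha, c, hc, hKw⟩ := seq_elim' hW
    rcases hKw with ⟨rfl, hnw⟩ | ⟨rfl, hnw⟩ | hnw
    · have hfone : f ∈ gam B := by simpa using hf one ha
      refine gam_closed (smt_mem_seq hfone (hg1 c hc)) ?_
      exact smt_congr dref hnw
    · refine gam_closed (seq_memR (hg1 one hc) (hf a ha)) ?_
      exact smt_congr dref hnw
    · have hWne : W ≠ one := deriv_ne_one hnw (by simp)
      by_cases hf1 : f = one
      · subst hf1; simp only [smt_one_left]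
        have haB : a ∈ gam B := by simpa using hf a ha
        exact gam_of_neg (seq_gen_p haB (hg1 c hc)) hnw
      · rw [smt_ne hf1 hWne]
        have hb' : tens f a ∈ gam B := tens_of_smt (hf a ha)
        refine gam_of_neg (seq_gen_p hb' (hg1 c hc)) ?_
        exact dtrans (drule (IBVRule.sqL_neg f a c)) (dTensR hnw)
  · obtain ⟨f, hf, hnf⟩ := limp_elim ht1
    obtain ⟨g, hg, hng⟩ := limp_elim ht2
    have hfY : ∀ Y ∈ gam A, smt t1 Y ∈ gam B :=
      fun Y hY => gam_closed (hf Y hY) (smt_congr hnf dref)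
    have hgY : ∀ Y ∈ gam C, smt t2 Y ∈ gam D :=
      fun Y hY => gam_closed (hg Y hY) (smt_congr hng dref)
    refine gam_of_neg (limp_gen fun W hW => ?_) hnx
    obtain ⟨a, ha, c, hc, hKw⟩ := seq_elim' hW
    rcases hKw with ⟨rfl, hnw⟩ | ⟨rfl, hnw⟩ | hnw
    · -- W ⟵ c
      refine gam_closed ?_ (smt_congr (dref (X := seq t1 t2)) hnw)
      by_cases hc1 : c = one
      · subst hc1; simp only [smt_one_right]
        have h1 : t1 ∈ gam B := by simpa using hfY one ha
        have h2 : t2 ∈ gam D := by simpa using hgY one hc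
        exact seq_gen_p h1 h2
      · rw [smt_ne (by simp) hc1]
        have h1 : t1 ∈ gam B := by simpa using hfY one ha
        have hd' : tens c t2 ∈ gam D := tens_of_smt (gam_closed (hgY c hc) (nComm t2 c))
        refine gam_of_neg (seq_gen_p h1 hd') ?_
        exact dtrans (drule (IBVRule.sqR_neg c t1 t2))
          (drule (IBVRule.com_tens false c (seq t1 t2)))
    · -- W ⟵ a
      refine gam_closed ?_ (smt_congr (dref (X := seq t1 t2)) hnw)
      by_cases ha1 : a = one
      · subst ha1; simp only [smt_one_right]
        have h1 : t1 ∈ gam B := by simpa using hfY one ha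
        have h2 : t2 ∈ gam D := by simpa using hgY one hc
        exact seq_gen_p h1 h2
      · rw [smt_ne (by simp) ha1]
        have h2 : t2 ∈ gam D := by simpa using hgY one hc
        have hb' : tens a t1 ∈ gam B := tens_of_smt (gam_closed (hfY a ha) (nComm t1 a))
        refine gam_of_neg (seq_gen_p hb' h2) ?_
        exact dtrans (drule (IBVRule.sqL_neg a t1 t2))
          (drule (IBVRule.com_tens false a (seq t1 t2)))
    · -- W ⟵ seq a c
      have hWne : W ≠ one := deriv_ne_one hnw (by simp)
      rw [smt_ne (by simp) hWne]
      have hb' : tens t1 a ∈ gam B := tens_of_smt (hfY a ha)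
      have hd' : tens t2 c ∈ gam D := tens_of_smt (hgY c hc)
      refine gam_of_neg (seq_gen_p hb' hd') ?_
      exact dtrans (drule (IBVRule.q_down_neg t1 a t2 c)) (dTensR hnw)

/-! ### Congruence and full soundness -/

lemma mono_tensL {A A' B : IBVF} (h : gam A ⊆ gam A') :
    gam (tens A B) ⊆ gam (tens A' B) := by
  intro x hx
  obtain ⟨s, hs, t, ht, hn⟩ := tens_elim hx
  exact gam_of_neg (tens_gen (h hs) ht) hn

lemma mono_tensR {A B B' : IBVF} (h : gam B ⊆ gam B') :
    gam (tens A B) ⊆ gam (tens A B') := by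
  intro x hx
  obtain ⟨s, hs, t, ht, hn⟩ := tens_elim hx
  exact gam_of_neg (tens_gen hs (h ht)) hn

lemma mono_seqL {A A' B : IBVF} (h : gam A ⊆ gam A') :
    gam (seq A B) ⊆ gam (seq A' B) := by
  intro x hx
  obtain ⟨s, hs, t, ht, hn | hn⟩ := seq_elim hx
  · exact gam_of_neg (seq_gen_s (h hs) ht) hn
  · exact gam_of_neg (seq_gen_p (h hs) ht) hn

lemma mono_seqR {A B B' : IBVF} (h : gam B ⊆ gam B') :
    gam (seq A B) ⊆ gam (seq A B') := by
  intro x hx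
  obtain ⟨s, hs, t, ht, hn | hn⟩ := seq_elim hx
  · exact gam_of_neg (seq_gen_s hs (h ht)) hn
  · exact gam_of_neg (seq_gen_p hs (h ht)) hn

lemma mono_limp {A A' B B' : IBVF} (h1 : gam A' ⊆ gam A) (h2 : gam B ⊆ gam B') :
    gam (limp A B) ⊆ gam (limp A' B') := by
  intro x hx
  obtain ⟨V, hV, hn⟩ := limp_elim hx
  exact gam_of_neg (limp_gen fun Y hY => h2 (hV Y (h1 hY))) hn

theorem soundStep {p : Bool} {X Y : IBVF} (h : Step IBVRule p X Y) :
    (p = true → gam X ⊆ gam Y) ∧ (p = false → gam Y ⊆ gam X) := by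
  induction h with
  | rule hr =>
    cases hr with
    | ai_down a => exact ⟨fun _ => sound_ai a, fun h => absurd h (by simp)⟩
    | u_down_seqL => exact ⟨fun _ => sound_useqL _, fun h => absurd h (by simp)⟩
    | u_down_seqR => exact ⟨fun _ => sound_useqR _, fun h => absurd h (by simp)⟩
    | ref_pos A B => exact ⟨fun _ => sound_ref A B, fun h => absurd h (by simp)⟩
    | ref_neg A B => exact ⟨fun h => absurd h (by simp), fun _ => sound_ref A B⟩
    | sL_pos A B C => exact ⟨fun _ => sound_sL A B C, fun h => absurd h (by simp)⟩
    | sR_pos A B C => exact ⟨fun _ => sound_sR A B C, fun h => absurd h (by simp)⟩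
    | sL_neg A B C => exact ⟨fun h => absurd h (by simp), fun _ => sound_sL A B C⟩
    | sR_neg A B C => exact ⟨fun h => absurd h (by simp), fun _ => sound_sR A B C⟩
    | sqL_pos A B C => exact ⟨fun _ => sound_sqLpos A B C, fun h => absurd h (by simp)⟩
    | sqR_pos A B C => exact ⟨fun _ => sound_sqRpos A B C, fun h => absurd h (by simp)⟩
    | sqL_neg A B C => exact ⟨fun h => absurd h (by simp), fun _ => sound_sqLneg A B C⟩
    | sqR_neg A B C => exact ⟨fun h => absurd h (by simp), fun _ => sound_sqRneg A B C⟩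
    | q_down_pos A B C D => exact ⟨fun _ => sound_qpos A B C D, fun h => absurd h (by simp)⟩
    | q_down_neg A B C D => exact ⟨fun h => absurd h (by simp), fun _ => sound_qneg A B C D⟩
    | com_tens p A B => exact ⟨fun _ => sound_com A B, fun _ => sound_com B A⟩
    | asso_tens p A B C => exact ⟨fun _ => sound_assoc1 A B C, fun _ => sound_assoc2 A B C⟩
    | assoL_seq p A B C => exact ⟨fun _ => sound_sassoc1 A B C, fun _ => sound_sassoc2 A B C⟩
    | assoR_seq p A B C => exact ⟨fun _ => sound_sassoc2 A B C, fun _ => sound_sassoc1 A B C⟩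
    | u_down_tens => exact ⟨fun _ => sound_utens1 _, fun _ => sound_utens2 _⟩
    | u_down_limp => exact ⟨fun _ => sound_ulimp1 _, fun _ => sound_ulimp2 _⟩
    | cur p A B C => exact ⟨fun _ => sound_cur1 A B C, fun _ => sound_cur2 A B C⟩
    | ruc p A B C => exact ⟨fun _ => sound_cur2 A B C, fun _ => sound_cur1 A B C⟩
  | tensL _ ih => exact ⟨fun hp => mono_tensL (ih.1 hp), fun hp => mono_tensL (ih.2 hp)⟩
  | tensR _ ih => exact ⟨fun hp => mono_tensR (ih.1 hp), fun hp => mono_tensR (ih.2 hp)⟩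
  | seqL _ ih => exact ⟨fun hp => mono_seqL (ih.1 hp), fun hp => mono_seqL (ih.2 hp)⟩
  | seqR _ ih => exact ⟨fun hp => mono_seqR (ih.1 hp), fun hp => mono_seqR (ih.2 hp)⟩
  | limpL _ ih =>
    refine ⟨fun hp => mono_limp (ih.2 (by simp [hp])) subset_rfl,
      fun hp => mono_limp (ih.1 (by simp [hp])) subset_rfl⟩
  | limpR _ ih => exact ⟨fun hp => mono_limp subset_rfl (ih.1 hp),
      fun hp => mono_limp subset_rfl (ih.2 hp)⟩

theorem soundDeriv {X Y : IBVF} (h : Pos X Y) : gam X ⊆ gam Y := by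
  induction h with
  | refl => exact subset_rfl
  | tail _ hs ih => exact subset_trans ih ((soundStep hs).1 rfl)

/-! ### The key extraction theorem -/

theorem key {A B : IBVF} (h : Pos one (limp (limp B B) (limp A B))) :
    Pos one (limp A B) := by
  have h1 : (one : IBVF) ∈ gam (limp (limp B B) (limp A B)) := soundDeriv h mem_one
  have h2 : (one : IBVF) ∈ gam (limp B B) := soundDeriv (idd B) mem_one
  have h3 : (one : IBVF) ∈ gam (limp A B) := one_in_limp h1 one h2
  have h4 : A ∈ gam B := one_in_limp h3 A (adeq A).1
  exact J_to_limp ((adeq B).2 A h4)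

end IBVAux

/-- For fixed formulas A and B, the following are equivalent in IBV:
    (1) A⊸B is provable; (2) P[A]⊸P[B] is provable for every positive context P;
    (3) N[B]⊸N[A] is provable for every negative context N. -/
theorem IBV.context_monotone_tfae (A B : IBVF) :
    (IBVProvable (limp A B) ↔
      ∀ P : Ctx, P.pol = true → IBVProvable (limp (P.fill A) (P.fill B))) ∧
    (IBVProvable (limp A B) ↔
      ∀ N : Ctx, N.pol = false → IBVProvable (limp (N.fill B) (N.fill A))) := by
  constructor
  · constructor
    · intro h P hp
      exact (IBVAux.monoCtx h P).1 hp
    · intro h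
      exact h Ctx.hole rfl
  · constructor
    · intro h N hn
      exact (IBVAux.monoCtx h N).2 hn
    · intro h
      have h0 := h (Ctx.limpL Ctx.hole B) rfl
      exact IBVAux.key h0
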